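/- Let 𝒴 and 𝒵 be finite disjoint subsets of ℝ^d, and write τ(𝒳) for the vertex cover number of the geometric graph G(𝒳,1). Then τ(𝒴) + τ(𝒵) ≤ τ(𝒴 ∪ 𝒵), and τ(𝒴 ∪ 𝒵) ≤ τ(𝒴) + τ(𝒵) + |∂_𝒵(𝒴)|, where ∂_𝒵(𝒴) is the set of points of 𝒴 at Euclidean distance at most 1 from 𝒵. -/

import Mathlib

open MeasureTheory ProbabilityTheory Filter Set Metric Bornology
open scoped Classical ENNReal NNReal symmDiff

noncomputable section

/-- Points of `ℝ^d`. -/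
abbrev Pt (d : ℕ) := EuclideanSpace ℝ (Fin d)

/-- The half-open cube `Q_s = [-s/2, s/2)^d`. -/
def cube (d : ℕ) (s : ℝ) : Set (Pt d) := {x | ∀ i, x i ∈ Set.Ico (-(s / 2)) (s / 2)}

/-- The uniform distribution on `Q_s`. -/
def unifCube (d : ℕ) (s : ℝ) : Measure (Pt d) :=
  (volume (cube d s))⁻¹ • volume.restrict (cube d s)

/-- `E[ζ(H_{λ,s})]`, where `H_{λ,s} = {Y_1, …, Y_N}` with `N` a Poisson random variable of
mean `λ s^d` independent of an i.i.d. sequence `Y_1, Y_2, …` of uniform points of `Q_s`. -/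
def poissonExp (d : ℕ) (zeta : Finset (Pt d) → ℝ) (lam s : ℝ) : ℝ :=
  ∑' k : ℕ, (Real.exp (-(lam * s ^ d)) * (lam * s ^ d) ^ k / (Nat.factorial k : ℝ)) *
    ∫ y : Fin k → Pt d, zeta (Finset.image y Finset.univ) ∂(Measure.pi fun _ => unifCube d s)

/-- `|∂_Z(Y)|`: the number of points of `Y` lying within Euclidean distance 1 of `Z`. -/
def bdry (d : ℕ) (Y Z : Finset (Pt d)) : ℕ :=
  {y ∈ (Y : Set (Pt d)) | ∃ z ∈ Z, dist y z ≤ 1}.ncard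

/-- The rescaled set `r⁻¹ 𝒳`. -/
def scaleSet (d : ℕ) (r : ℝ) (X : Finset (Pt d)) : Finset (Pt d) :=
  X.image fun x => r⁻¹ • x

/-- `ζ*(A) = sup {ζ(X) : X ⊆ A finite}`. -/
def zetaStar (d : ℕ) (zeta : Finset (Pt d) → ℝ) (A : Set (Pt d)) : ℝ :=
  sSup {t | ∃ X : Finset (Pt d), (X : Set (Pt d)) ⊆ A ∧ t = zeta X}

/-- Domination number of the geometric graph `G(X, r)`. -/
def domNum (d : ℕ) (r : ℝ) (X : Finset (Pt d)) : ℕ :=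
  sInf {n | ∃ A ⊆ X, A.card = n ∧ ∀ x ∈ X, ∃ a ∈ A, dist x a ≤ r}

/-- Independence number of the geometric graph `G(X, r)`. -/
def indepNum (d : ℕ) (r : ℝ) (X : Finset (Pt d)) : ℕ :=
  sSup {n | ∃ A ⊆ X, A.card = n ∧ ∀ x ∈ A, ∀ y ∈ A, x ≠ y → r < dist x y}

/-- Clique-covering number of the geometric graph `G(X, r)`. -/
def cliqueCoverNum (d : ℕ) (r : ℝ) (X : Finset (Pt d)) : ℕ :=
  sInf {n | ∃ P : Finset (Finset (Pt d)), P.card = n ∧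
    (∀ C ∈ P, C ⊆ X ∧ C.Nonempty ∧ ∀ x ∈ C, ∀ y ∈ C, x ≠ y → dist x y ≤ r) ∧
    ∀ x ∈ X, ∃! C, C ∈ P ∧ x ∈ C}

/-- Vertex cover number of the geometric graph `G(X, r)`. -/
def vcNum (d : ℕ) (r : ℝ) (X : Finset (Pt d)) : ℕ :=
  sInf {n | ∃ A ⊆ X, A.card = n ∧
    ∀ x ∈ X, ∀ y ∈ X, x ≠ y → dist x y ≤ r → x ∈ A ∨ y ∈ A}

/-- Number of isolated vertices of the geometric graph `G(X, r)`. -/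
def isolCount (d : ℕ) (r : ℝ) (X : Finset (Pt d)) : ℕ :=
  {x ∈ (X : Set (Pt d)) | ∀ y ∈ X, y ≠ x → r < dist x y}.ncard

/-- `κ(A)`: the minimal number of closed unit balls whose union contains `A`. -/
def covNum (d : ℕ) (A : Set (Pt d)) : ℕ :=
  sInf {n | ∃ C : Finset (Pt d), C.card = n ∧ A ⊆ ⋃ x ∈ C, Metric.closedBall x 1}

/-- `α*(A)`: the maximum cardinality of a finite subset of `A` with pairwise distances `> 1`. -/
def packNum (d : ℕ) (A : Set (Pt d)) : ℕ :=
  sSup {n | ∃ X : Finset (Pt d), (X : Set (Pt d)) ⊆ A ∧ X.card = n ∧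
    ∀ x ∈ X, ∀ y ∈ X, x ≠ y → 1 < dist x y}

/-- `γ*(A) = sup {γ(G(X,1)) : X ⊆ A finite}`. -/
def domStar (d : ℕ) (A : Set (Pt d)) : ℕ :=
  sSup {n | ∃ X : Finset (Pt d), (X : Set (Pt d)) ⊆ A ∧ domNum d 1 X = n}

/-- Minimum weight of a travelling salesman tour through `X`, for the weight function `w`
(a tour is a Hamiltonian cycle of the complete graph on `X`, and an edge `{x,y}` has
weight `w (x - y)`), with the convention that the value is `0` when `|X| ≤ 2`. -/
def TSPw (d : ℕ) (w : Pt d → ℝ) (X : Finset (Pt d)) : ℝ :=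
  if h : 3 ≤ X.card then
    haveI : NeZero X.card := ⟨by omega⟩
    sInf {t | ∃ g : Fin X.card → Pt d, Function.Injective g ∧ (∀ i, g i ∈ X) ∧
      t = ∑ i, w (g (i + 1) - g i)}
  else 0

/-- Maximum `H`-packing number of the geometric graph `G(X, r)`. -/
def hPackNum {V : Type} [Fintype V] (H : SimpleGraph V) (d : ℕ) (r : ℝ)
    (X : Finset (Pt d)) : ℕ :=
  sSup {m | ∃ φ : Fin m → V → Pt d,
    (∀ i, Function.Injective (φ i)) ∧ (∀ i v, φ i v ∈ X) ∧
    (∀ i u v, H.Adj u v → dist (φ i u) (φ i v) ≤ r) ∧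
    (∀ i j, i ≠ j → ∀ u v, φ i u ≠ φ j v)}


/-- sub/superadditivity of the vertex cover number of the RGG. -/
theorem vertex_cover_number_superadd_subadd {d : ℕ}
    (Y Z : Finset (Pt d)) (hYZ : Disjoint Y Z) :
    vcNum d 1 Y + vcNum d 1 Z ≤ vcNum d 1 (Y ∪ Z) ∧
    vcNum d 1 (Y ∪ Z) ≤ vcNum d 1 Y + vcNum d 1 Z + bdry d Y Z := by
  have hne : ∀ X : Finset (Pt d), {n | ∃ A ⊆ X, A.card = n ∧
      ∀ x ∈ X, ∀ y ∈ X, x ≠ y → dist x y ≤ 1 → x ∈ A ∨ y ∈ A}.Nonempty := by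
    intro X
    exact ⟨X.card, X, le_refl X, rfl, fun x hx y hy _ _ => Or.inl hx⟩
  have hle : ∀ (X A : Finset (Pt d)), A ⊆ X →
      (∀ x ∈ X, ∀ y ∈ X, x ≠ y → dist x y ≤ 1 → x ∈ A ∨ y ∈ A) →
      vcNum d 1 X ≤ A.card := by
    intro X A hAX hcov
    exact Nat.sInf_le ⟨A, hAX, rfl, hcov⟩
  constructor
  · -- superadditivity
    obtain ⟨A, hA, hAcard, hAcov⟩ := Nat.sInf_mem (hne (Y ∪ Z))
    have h1 : vcNum d 1 Y ≤ (A ∩ Y).card := by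
      apply hle
      · exact Finset.inter_subset_right
      · intro x hx y hy hxy hd
        rcases hAcov x (Finset.mem_union_left _ hx) y (Finset.mem_union_left _ hy) hxy hd with h | h
        · exact Or.inl (Finset.mem_inter.mpr ⟨h, hx⟩)
        · exact Or.inr (Finset.mem_inter.mpr ⟨h, hy⟩)
    have h2 : vcNum d 1 Z ≤ (A ∩ Z).card := by
      apply hle
      · exact Finset.inter_subset_right
      · intro x hx y hy hxy hd
        rcases hAcov x (Finset.mem_union_right _ hx) y (Finset.mem_union_right _ hy) hxy hd with h | h
        · exact Or.inl (Finset.mem_inter.mpr ⟨h, hx⟩)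
        · exact Or.inr (Finset.mem_inter.mpr ⟨h, hy⟩)
    have hdisj : Disjoint (A ∩ Y) (A ∩ Z) :=
      hYZ.mono Finset.inter_subset_right Finset.inter_subset_right
    have h3 : (A ∩ Y).card + (A ∩ Z).card ≤ A.card := by
      rw [← Finset.card_union_of_disjoint hdisj]
      exact Finset.card_le_card (Finset.union_subset Finset.inter_subset_left
        Finset.inter_subset_left)
    calc vcNum d 1 Y + vcNum d 1 Z ≤ (A ∩ Y).card + (A ∩ Z).card := add_le_add h1 h2
      _ ≤ A.card := h3
      _ = vcNum d 1 (Y ∪ Z) := hAcard ▸ rfl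
  · -- subadditivity
    obtain ⟨A, hA, hAcard, hAcov⟩ := Nat.sInf_mem (hne Y)
    obtain ⟨B, hB, hBcard, hBcov⟩ := Nat.sInf_mem (hne Z)
    set S : Finset (Pt d) := Y.filter (fun y => ∃ z ∈ Z, dist y z ≤ 1) with hS
    have hbdry : bdry d Y Z = S.card := by
      rw [bdry, ← Set.ncard_coe_finset]
      congr 1
      ext y
      simp [hS, Set.mem_setOf_eq]
    have hcov : ∀ x ∈ Y ∪ Z, ∀ y ∈ Y ∪ Z, x ≠ y → dist x y ≤ 1 →
        x ∈ A ∪ B ∪ S ∨ y ∈ A ∪ B ∪ S := by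
      intro x hx y hy hxy hd
      simp only [Finset.mem_union] at hx hy ⊢
      rcases hx with hx | hx <;> rcases hy with hy | hy
      · rcases hAcov x hx y hy hxy hd with h | h
        · exact Or.inl (Or.inl (Or.inl h))
        · exact Or.inr (Or.inl (Or.inl h))
      · exact Or.inl (Or.inr (Finset.mem_filter.mpr ⟨hx, y, hy, hd⟩))
      · exact Or.inr (Or.inr (Finset.mem_filter.mpr ⟨hy, x, hx, by rwa [dist_comm]⟩))
      · rcases hBcov x hx y hy hxy hd with h | h
        · exact Or.inl (Or.inl (Or.inr h))
        · exact Or.inr (Or.inl (Or.inr h))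
    have hsub : A ∪ B ∪ S ⊆ Y ∪ Z := by
      apply Finset.union_subset
      apply Finset.union_subset
      · exact hA.trans Finset.subset_union_left
      · exact hB.trans Finset.subset_union_right
      · exact (Finset.filter_subset _ _).trans Finset.subset_union_left
    calc vcNum d 1 (Y ∪ Z) ≤ (A ∪ B ∪ S).card := hle _ _ hsub hcov
      _ ≤ (A ∪ B).card + S.card := Finset.card_union_le _ _
      _ ≤ A.card + B.card + S.card := by
          exact Nat.add_le_add_right (Finset.card_union_le _ _) _
      _ = vcNum d 1 Y + vcNum d 1 Z + bdry d Y Z := by rw [hAcard, hBcard, hbdry]; rfl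
end
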